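/- Let T ⊂ R^2 be the triangle with vertices (0,0), ((s_1/t_1)(a/b), a/b), ((s_2/t_2)(a/b), a/b) with a,b,t_1,t_2 positive integers, s_1,s_2 integers, s_2/t_2 > s_1/t_1, gcd(a,b)=gcd(s_1,t_1)=gcd(s_2,t_2)=1. Then the linear coefficient of the rational Ehrhart quasi-polynomial of T is Q_1(T,r) = (a/b)·[ (t_1+t_2)/(2 t_1 t_2) - ({ar/b} - 1/2)(s_2/t_2 - s_1/t_1) ], where {x} denotes the fractional part of x. -/

import Mathlib

open Pointwise

/-- A point of `ℚⁿ` is a lattice point if all its coordinates are integers. -/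
def IsLatticePt {n : ℕ} (x : Fin n → ℚ) : Prop := ∀ i, ∃ z : ℤ, x i = (z : ℚ)

/-- The number of lattice points in the dilate `r • P`. -/
noncomputable def latticeCount {n : ℕ} (P : Set (Fin n → ℚ)) (r : ℚ) : ℕ :=
  Set.ncard {x | x ∈ r • P ∧ IsLatticePt x}

/-- A rational polytope: the convex hull of finitely many rational points. -/
def IsRatPolytope {n : ℕ} (P : Set (Fin n → ℚ)) : Prop :=
  ∃ V : Finset (Fin n → ℚ), P = convexHull ℚ (V : Set (Fin n → ℚ))

/-- The dimension of a set, as the dimension of its affine hull. -/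
noncomputable def polyDim {n : ℕ} (P : Set (Fin n → ℚ)) : ℕ :=
  Module.finrank ℚ (vectorSpan ℚ P)

/-- `F` is a face of the polytope `P`. -/
def IsFace {n : ℕ} (P F : Set (Fin n → ℚ)) : Prop :=
  F = P ∨ ∃ (f : (Fin n → ℚ) →ₗ[ℚ] ℚ) (c : ℚ),
    (∀ x ∈ P, f x ≤ c) ∧ F = {x | x ∈ P ∧ f x = c}

/-- `F` is an `i`-dimensional (nonempty) face of `P`. -/
def IsIFace {n : ℕ} (P F : Set (Fin n → ℚ)) (i : ℕ) : Prop :=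
  IsFace P F ∧ F.Nonempty ∧ polyDim F = i

/-- The dilated affine hull `r • aff(F)` contains a lattice point. -/
def DilAffHasLattice {n : ℕ} (F : Set (Fin n → ℚ)) (r : ℚ) : Prop :=
  ∃ x ∈ r • (affineSpan ℚ F : Set (Fin n → ℚ)), IsLatticePt x

/-- `k` is the `i`-index `d_i(P)`: the smallest positive integer such that
`k • aff(F)` contains a lattice point for every `i`-face `F` of `P`. -/
def IsIIndex {n : ℕ} (P : Set (Fin n → ℚ)) (i : ℕ) (k : ℕ) : Prop :=
  0 < k ∧ (∀ F, IsIFace P F i → DilAffHasLattice F (k : ℚ)) ∧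
    ∀ k' : ℕ, 0 < k' → (∀ F, IsIFace P F i → DilAffHasLattice F (k' : ℚ)) → k ≤ k'

/-- `q` is the rational `i`-index `rd_i(P)`: the smallest positive rational such that
`q • aff(F)` contains a lattice point for every `i`-face `F` of `P`. -/
def IsRatIIndex {n : ℕ} (P : Set (Fin n → ℚ)) (i : ℕ) (q : ℚ) : Prop :=
  0 < q ∧ (∀ F, IsIFace P F i → DilAffHasLattice F q) ∧
    ∀ q' : ℚ, 0 < q' → (∀ F, IsIFace P F i → DilAffHasLattice F q') → q ≤ q'

/-- An integral polytope: the convex hull of finitely many lattice points. -/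
def IsIntegralPolytope {n : ℕ} (P : Set (Fin n → ℚ)) : Prop :=
  ∃ V : Finset (Fin n → ℚ), (∀ v ∈ V, IsLatticePt v) ∧
    P = convexHull ℚ (V : Set (Fin n → ℚ))

/-- `q` is the rational denominator `q(P)`: the smallest positive rational such that
`q • P` is an integral polytope. -/
def IsRatDenom {n : ℕ} (P : Set (Fin n → ℚ)) (q : ℚ) : Prop :=
  0 < q ∧ IsIntegralPolytope (q • P) ∧
    ∀ q' : ℚ, 0 < q' → IsIntegralPolytope (q' • P) → q ≤ q'

/-- `f` is periodic with period `d`. -/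
def IsPeriodic (f : ℚ → ℚ) (d : ℚ) : Prop := ∀ r, f (r + d) = f r

/-- `Q` is a family of coefficient functions of the rational Ehrhart quasi-polynomial
of `P` (of degree `d`): each `Q i` is periodic with some positive period and
`#(rP ∩ ℤⁿ) = ∑_{i=0}^{d} Q_i(P,r) rⁱ` for all rational `r ≥ 0`. -/
def IsRatEhrhartCoeffs {n : ℕ} (P : Set (Fin n → ℚ)) (d : ℕ) (Q : ℕ → ℚ → ℚ) : Prop :=
  (∀ i, ∃ p : ℚ, 0 < p ∧ IsPeriodic (Q i) p) ∧
  ∀ r : ℚ, 0 ≤ r → (latticeCount P r : ℚ) = ∑ i ∈ Finset.range (d + 1), Q i r * r ^ i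

/-- `G` is the family of coefficient functions of the classical Ehrhart quasi-polynomial
of `P` (of degree `d`): each `G i` is periodic with some positive integer period and
`#(kP ∩ ℤⁿ) = ∑_{i=0}^{d} G_i(P,k) kⁱ` for all integers `k ≥ 0`. -/
def IsEhrhartCoeffs {n : ℕ} (P : Set (Fin n → ℚ)) (d : ℕ) (G : ℕ → ℕ → ℚ) : Prop :=
  (∀ i, ∃ p : ℕ, 0 < p ∧ ∀ k, G i (k + p) = G i k) ∧
  ∀ k : ℕ, (latticeCount P (k : ℚ) : ℚ) = ∑ i ∈ Finset.range (d + 1), G i k * (k : ℚ) ^ i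

/-- The triangle `T = conv((0,0), ((s₁/t₁)(a/b), a/b), ((s₂/t₂)(a/b), a/b))`. -/
def Tri (a b : ℕ) (s1 s2 : ℤ) (t1 t2 : ℕ) : Set (Fin 2 → ℚ) :=
  convexHull ℚ {![0, 0], ![((s1 : ℚ) / t1) * ((a : ℚ) / b), (a : ℚ) / b],
    ![((s2 : ℚ) / t2) * ((a : ℚ) / b), (a : ℚ) / b]}


section aux
open Finset

lemma window_shift (g : ℕ → ℚ) (L : ℕ) (hg : ∀ y, g (y + L) = g y) (c : ℕ) :
    ∑ j ∈ range L, g (c + 1 + j) = ∑ j ∈ range L, g (c + j) := by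
  have h1 : ∑ j ∈ range (L+1), g (c + j) = ∑ j ∈ range L, g (c + j) + g (c + L) :=
    Finset.sum_range_succ _ _
  have h2 : ∑ j ∈ range (L+1), g (c + j) = (∑ j ∈ range L, g (c + (j + 1))) + g (c + 0) :=
    Finset.sum_range_succ' _ _
  have h3 : ∑ j ∈ range L, g (c + (j + 1)) = ∑ j ∈ range L, g (c + 1 + j) :=
    Finset.sum_congr rfl (fun j _ => by rw [show c + (j+1) = c + 1 + j by ring])
  have h4 : g (c + L) = g c := hg c
  simp only [add_zero, h3, h4] at h1 h2
  linarith

lemma window_sum (g : ℕ → ℚ) (L : ℕ) (hg : ∀ y, g (y + L) = g y) (c : ℕ) :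
    ∑ j ∈ range L, g (c + j) = ∑ j ∈ range L, g j := by
  induction c with
  | zero => simp
  | succ c ih => rw [window_shift g L hg c, ih]

/-- sum over k blocks of length L of an L-periodic function -/
lemma block_sum (g : ℕ → ℚ) (L : ℕ) (hg : ∀ y, g (y + L) = g y) (k : ℕ) :
    ∑ j ∈ range (k * L), g j = k * ∑ j ∈ range L, g j := by
  induction k with
  | zero => simp
  | succ k ih =>
    rw [show (k+1)*L = k*L + L by ring, Finset.sum_range_add, ih,
      window_sum g L hg (k*L)]
    push_cast; ring

lemma fract_mul_div (s : ℤ) (t : ℕ) (y : ℕ) :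
    Int.fract ((s : ℚ) * y / t) = (((s * y) % t : ℤ) : ℚ) / t := by
  have h := Int.fract_div_intCast_eq_div_intCast_mod (k := ℚ) (m := s * y) (n := t)
  push_cast at h ⊢
  exact h

lemma residue_sum (s : ℤ) (t : ℕ) (ht : 0 < t) (hst : Int.gcd s t = 1) :
    ∑ y ∈ range t, Int.fract ((s : ℚ) * y / t) = ((t : ℚ) - 1) / 2 := by
  have ht' : (0:ℤ) < (t:ℤ) := by exact_mod_cast ht
  simp only [fract_mul_div]
  rw [← Finset.sum_div]
  have key : ∑ y ∈ range t, (((s * y) % t : ℤ) : ℚ) = ∑ x ∈ range t, (x : ℚ) := by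
    have hval : ∀ y : ℕ, (((s * y) % t : ℤ) : ℚ) = (((s * (y:ℤ)) % t).toNat : ℚ) := by
      intro y
      have h0 : 0 ≤ (s * y) % t := Int.emod_nonneg _ (by omega)
      exact_mod_cast congrArg (fun z : ℤ => (z : ℚ)) (Int.toNat_of_nonneg h0).symm
    simp only [hval]
    have hinj : ∀ x ∈ range t, ∀ y ∈ range t,
        (s * (x:ℤ) % t).toNat = (s * (y:ℤ) % t).toNat → x = y := by
      intro x hx y hy hxy
      simp only [mem_range] at hx hy
      have h0x : 0 ≤ (s * x) % t := Int.emod_nonneg _ (by omega)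
      have h0y : 0 ≤ (s * y) % t := Int.emod_nonneg _ (by omega)
      have hmod : s * (x:ℤ) % t = s * (y:ℤ) % t := by omega
      have hdvd : (t:ℤ) ∣ s * ((x:ℤ) - y) := by
        have h2 : (t:ℤ) ∣ s * x - s * y := Int.ModEq.dvd (Int.ModEq.symm hmod)
        simpa [mul_sub] using h2
      have hco : IsCoprime (t:ℤ) s := by
        rw [Int.isCoprime_iff_gcd_eq_one, Int.gcd_comm]; exact hst
      have hdvd2 : (t:ℤ) ∣ ((x:ℤ) - y) := hco.dvd_of_dvd_mul_left hdvd
      have : (x:ℤ) - y = 0 := by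
        rcases hdvd2 with ⟨c, hc⟩
        rcases eq_or_ne c 0 with rfl | hc0
        · simpa using hc
        · exfalso
          have h1 : 1 ≤ |c| := Int.one_le_abs hc0
          have : (t:ℤ) ≤ |(x:ℤ) - y| := by
            rw [hc, abs_mul, abs_of_pos ht']
            nlinarith [abs_nonneg c]
          have hlt : |(x:ℤ) - y| < t := by
            rw [abs_sub_lt_iff]; constructor <;> push_cast <;> omega
          omega
      omega
    have himg : Finset.image (fun y : ℕ => (s * (y:ℤ) % t).toNat) (range t) = range t := by
      apply Finset.eq_of_subset_of_card_le
      · intro x hx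
        simp only [Finset.mem_image, mem_range] at hx ⊢
        rcases hx with ⟨y, _, rfl⟩
        have h0 : 0 ≤ (s * (y:ℤ)) % t := Int.emod_nonneg _ (by omega)
        have h1 : (s * (y:ℤ)) % t < t := Int.emod_lt_of_pos _ ht'
        omega
      · rw [Finset.card_image_of_injOn (fun x hx y hy => hinj x hx y hy)]
    calc ∑ y ∈ range t, ((s * (y:ℤ) % t).toNat : ℚ)
        = ∑ x ∈ Finset.image (fun y : ℕ => (s * (y:ℤ) % t).toNat) (range t), (x : ℚ) :=
          (Finset.sum_image hinj).symm
      _ = ∑ x ∈ range t, (x : ℚ) := by rw [himg]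
  rw [key]
  have h2 : (∑ x ∈ range t, (x:ℚ)) * 2 = t * (t - 1) := by
    have := Finset.sum_range_id_mul_two t
    have hc : ((∑ x ∈ range t, x) * 2 : ℕ) = ((t * (t-1) : ℕ) : ℚ) := by
      exact_mod_cast congrArg (fun n : ℕ => (n:ℚ)) this
    push_cast [Nat.cast_sub (by omega : 1 ≤ t)] at hc
    push_cast
    linarith
  have htq : (t:ℚ) ≠ 0 := by positivity
  field_simp
  linarith
lemma periodic_mul (g : ℕ → ℚ) (L : ℕ) (hg : ∀ y, g (y + L) = g y) (k : ℕ) :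
    ∀ y, g (y + k * L) = g y := by
  induction k with
  | zero => simp
  | succ k ih => intro y; rw [show y + (k+1)*L = (y + k*L) + L by ring, hg, ih]

section tri
variable (s1 s2 : ℤ) (t1 t2 : ℕ)

noncomputable def gfun (y : ℕ) : ℚ :=
  1 - Int.fract ((s2 : ℚ) * y / t2) - Int.fract (((-s1 : ℤ) : ℚ) * y / t1)

lemma fract_periodic (s : ℤ) (t : ℕ) (ht : 0 < t) (c : ℕ) (y : ℕ) :
    Int.fract ((s : ℚ) * (y + c * t) / t) = Int.fract ((s : ℚ) * y / t) := by
  have htq : (t:ℚ) ≠ 0 := by positivity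
  have h : (s : ℚ) * ((y:ℚ) + (c:ℚ) * (t:ℚ)) / t = (s:ℚ) * y / t + ((s * c : ℤ) : ℚ) := by
    push_cast; field_simp
  rw [h, Int.fract_add_intCast]

lemma gfun_periodic (ht1 : 0 < t1) (ht2 : 0 < t2) :
    ∀ y, gfun s1 s2 t1 t2 (y + t1 * t2) = gfun s1 s2 t1 t2 y := by
  intro y
  unfold gfun
  push_cast
  rw [fract_periodic s2 t2 ht2 t1 y]
  have h2' := fract_periodic (-s1) t1 ht1 t2 y
  push_cast at h2'
  rw [show ((t1:ℚ) * t2) = (t2:ℚ) * t1 by ring, h2']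

lemma gfun_block (ht1 : 0 < t1) (ht2 : 0 < t2)
    (h1 : Int.gcd s1 (t1 : ℤ) = 1) (h2 : Int.gcd s2 (t2 : ℤ) = 1) :
    ∑ y ∈ range (t1 * t2), gfun s1 s2 t1 t2 y = ((t1 : ℚ) + t2) / 2 := by
  unfold gfun
  rw [Finset.sum_sub_distrib, Finset.sum_sub_distrib, Finset.sum_const, card_range]
  have e2 : ∑ y ∈ range (t1 * t2), Int.fract ((s2 : ℚ) * y / t2)
      = t1 * (((t2:ℚ) - 1) / 2) := by
    rw [block_sum _ t2 (fun y => by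
          have := fract_periodic s2 t2 ht2 1 y; push_cast at this; simpa using this) t1]
    rw [residue_sum s2 t2 ht2 h2]
  have e1 : ∑ y ∈ range (t1 * t2), Int.fract (((-s1 : ℤ) : ℚ) * y / t1)
      = t2 * (((t1:ℚ) - 1) / 2) := by
    rw [show t1 * t2 = t2 * t1 by ring]
    rw [block_sum _ t1 (fun y => by
          have := fract_periodic (-s1) t1 ht1 1 y; push_cast at this; simpa using this) t2]
    rw [residue_sum (-s1) t1 ht1 (by rw [Int.neg_gcd]; exact h1)]
  rw [e1, e2]
  have ht1q : (0:ℚ) < t1 := by exact_mod_cast ht1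
  have ht2q : (0:ℚ) < t2 := by exact_mod_cast ht2
  push_cast
  ring

lemma Gshift (ht1 : 0 < t1) (ht2 : 0 < t2)
    (h1 : Int.gcd s1 (t1 : ℤ) = 1) (h2 : Int.gcd s2 (t2 : ℤ) = 1) (N k : ℕ) :
    ∑ y ∈ range (N + 1 + k * (t1 * t2)), gfun s1 s2 t1 t2 y
      = ∑ y ∈ range (N + 1), gfun s1 s2 t1 t2 y + k * (((t1 : ℚ) + t2) / 2) := by
  rw [Finset.sum_range_add]
  congr 1
  rw [window_sum _ _ (periodic_mul _ _ (gfun_periodic s1 s2 t1 t2 ht1 ht2) k) (N+1)]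
  rw [block_sum _ _ (gfun_periodic s1 s2 t1 t2 ht1 ht2) k,
    gfun_block s1 s2 t1 t2 ht1 ht2 h1 h2]
end tri

lemma ceil_eq_add_fract_neg (q : ℚ) : (⌈q⌉:ℚ) = q + Int.fract (-q) := by
  have h : (⌈q⌉:ℤ) = -⌊-q⌋ := rfl
  rw [h]
  have := Int.self_sub_fract (-q)
  push_cast
  linarith

lemma fsum (c1 c2 : ℚ) (N : ℕ) :
    ∑ y ∈ range (N + 1), ((⌊c2 * y⌋ : ℚ) - (⌈c1 * y⌉ : ℚ) + 1)
      = (c2 - c1) * N * (N + 1) / 2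
        + ∑ y ∈ range (N + 1), (1 - Int.fract (c2 * y) - Int.fract (-(c1 * y))) := by
  have hpt : ∀ y : ℕ, ((⌊c2 * y⌋ : ℚ) - (⌈c1 * y⌉ : ℚ) + 1)
      = (c2 - c1) * y + (1 - Int.fract (c2 * y) - Int.fract (-(c1 * y))) := by
    intro y
    rw [ceil_eq_add_fract_neg]
    have := Int.self_sub_fract (c2 * y)
    linarith
  rw [Finset.sum_congr rfl (fun y _ => hpt y), Finset.sum_add_distrib]
  congr 1
  rw [← Finset.mul_sum]
  have : ∑ y ∈ range (N+1), (y:ℚ) = (∑ y ∈ range (N+1), (y:ℕ) : ℕ) := by push_cast; ring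
  rw [this, Finset.sum_range_id]
  rw [Nat.cast_div (by rw [Nat.mul_comm]; exact (Nat.even_mul_succ_self N).two_dvd) (by norm_num : ((2:ℕ):ℚ) ≠ 0)]
  push_cast
  ring

lemma tri_mem (c1 c2 h : ℚ) (hc : c1 < c2) (hh : 0 ≤ h) (x : Fin 2 → ℚ) :
    x ∈ convexHull ℚ {![0,0], ![c1*h, h], ![c2*h, h]} ↔
      0 ≤ x 1 ∧ x 1 ≤ h ∧ c1 * x 1 ≤ x 0 ∧ x 0 ≤ c2 * x 1 := by
  constructor
  · intro hx
    have hconv : Convex ℚ {x : Fin 2 → ℚ |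
        0 ≤ x 1 ∧ x 1 ≤ h ∧ c1 * x 1 ≤ x 0 ∧ x 0 ≤ c2 * x 1} := by
      intro u hu v hv a b ha hb hab
      simp only [Set.mem_setOf_eq, Pi.add_apply, Pi.smul_apply, smul_eq_mul] at *
      obtain ⟨h1u, h2u, h3u, h4u⟩ := hu
      obtain ⟨h1v, h2v, h3v, h4v⟩ := hv
      refine ⟨by positivity, ?_, ?_, ?_⟩ <;> nlinarith
    have hsub : {![(0:ℚ),0], ![c1*h, h], ![c2*h, h]} ⊆ {x : Fin 2 → ℚ |
        0 ≤ x 1 ∧ x 1 ≤ h ∧ c1 * x 1 ≤ x 0 ∧ x 0 ≤ c2 * x 1} := by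
      intro v hv
      simp only [Set.mem_insert_iff, Set.mem_singleton_iff] at hv
      rcases hv with rfl | rfl | rfl <;>
        simp only [Set.mem_setOf_eq, Matrix.cons_val_zero, Matrix.cons_val_one,
          Matrix.head_cons] <;> refine ⟨by linarith, by linarith, by nlinarith, by nlinarith⟩
    exact convexHull_min hsub hconv hx
  · rintro ⟨h1, h2, h3, h4⟩
    have hv0 : ![(0:ℚ),0] ∈ convexHull ℚ {![(0:ℚ),0], ![c1*h, h], ![c2*h, h]} :=
      subset_convexHull ℚ _ (by simp)
    have hv1 : ![c1*h, h] ∈ convexHull ℚ {![(0:ℚ),0], ![c1*h, h], ![c2*h, h]} :=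
      subset_convexHull ℚ _ (by simp)
    have hv2 : ![c2*h, h] ∈ convexHull ℚ {![(0:ℚ),0], ![c1*h, h], ![c2*h, h]} :=
      subset_convexHull ℚ _ (by simp)
    have hcx := convex_convexHull ℚ {![(0:ℚ),0], ![c1*h, h], ![c2*h, h]}
    rcases eq_or_lt_of_le h1 with hx10 | hx1pos
    · have hx1 : x 1 = 0 := hx10.symm
      rw [hx1] at h3 h4
      simp only [mul_zero] at h3 h4
      have hx0 : x 0 = 0 := le_antisymm h4 h3
      have : x = ![(0:ℚ),0] := by
        funext i; fin_cases i <;> simp [hx0, ← hx10]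
      rw [this]; exact hv0
    · have hhpos : 0 < h := lt_of_lt_of_le hx1pos h2
      set μ : ℚ := (x 0 - c1 * x 1) / ((c2 - c1) * x 1) with hμ
      have hden : 0 < (c2 - c1) * x 1 := by nlinarith
      have hμ0 : 0 ≤ μ := by apply div_nonneg <;> linarith
      have hμ1 : μ ≤ 1 := by rw [div_le_one hden]; nlinarith
      have hm : (1 - μ) • ![c1*h, h] + μ • ![c2*h, h] ∈
          convexHull ℚ {![(0:ℚ),0], ![c1*h, h], ![c2*h, h]} :=
        hcx hv1 hv2 (by linarith) hμ0 (by ring)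
      set t : ℚ := x 1 / h with ht
      have hx : x = (1 - t) • ![(0:ℚ),0] + t • ((1 - μ) • ![c1*h, h] + μ • ![c2*h, h]) := by
        funext i
        fin_cases i <;>
          simp only [Pi.add_apply, Pi.smul_apply, Matrix.cons_val_zero, Matrix.cons_val_one,
            Matrix.head_cons, smul_eq_mul, Fin.zero_eta, Fin.mk_one]
        · have hne : c2 - c1 ≠ 0 := by linarith
          have hx1ne : x 1 ≠ 0 := ne_of_gt hx1pos
          have hhne : h ≠ 0 := ne_of_gt hhpos
          rw [ht, hμ]; field_simp; ring
        · rw [ht]; field_simp; ring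
      rw [hx]
      exact hcx hv0 hm (by rw [ht, sub_nonneg, div_le_one hhpos]; exact h2)
        (by rw [ht]; positivity) (by ring)
lemma tri_count (c1 c2 h : ℚ) (hc : c1 < c2) (hh : 0 ≤ h) :
    ({x : Fin 2 → ℚ | x ∈ convexHull ℚ {![0,0], ![c1*h,h], ![c2*h,h]} ∧ IsLatticePt x}.ncard : ℚ)
      = ∑ y ∈ range (⌊h⌋.toNat + 1), ((⌊c2*(y:ℚ)⌋ : ℚ) - (⌈c1*(y:ℚ)⌉ : ℚ) + 1) := by
  classical
  set F : Finset (Fin 2 → ℚ) := (range (⌊h⌋.toNat + 1)).biUnion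
    (fun y => (Finset.Icc ⌈c1*(y:ℚ)⌉ ⌊c2*(y:ℚ)⌋).image (fun z : ℤ => ![(z:ℚ), (y:ℚ)])) with hF
  have hfloor0 : 0 ≤ ⌊h⌋ := Int.floor_nonneg.mpr hh
  have hset : {x : Fin 2 → ℚ | x ∈ convexHull ℚ {![0,0], ![c1*h,h], ![c2*h,h]} ∧ IsLatticePt x}
      = ↑F := by
    ext x
    simp only [Set.mem_setOf_eq, hF, Finset.coe_biUnion, Finset.mem_coe, Finset.mem_biUnion,
      Finset.mem_image, Finset.mem_Icc, Finset.mem_range, Set.mem_iUnion, exists_prop]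
    constructor
    · rintro ⟨hx, hlat⟩
      rw [tri_mem c1 c2 h hc hh] at hx
      obtain ⟨h1, h2, h3, h4⟩ := hx
      obtain ⟨z0, hz0⟩ := hlat 0
      obtain ⟨z1, hz1⟩ := hlat 1
      have hz1nn : 0 ≤ z1 := by exact_mod_cast hz1 ▸ h1
      have hz1fl : z1 ≤ ⌊h⌋ := Int.le_floor.mpr (by rw [← hz1]; exact h2)
      have hcast : ((z1.toNat : ℕ) : ℚ) = ((z1:ℤ):ℚ) := by
        exact_mod_cast congrArg (Int.cast : ℤ → ℚ) (Int.toNat_of_nonneg hz1nn)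
      refine ⟨z1.toNat, by omega, z0, ⟨?_, ?_⟩, ?_⟩
      · rw [Int.ceil_le, hcast, ← hz1, ← hz0]; exact h3
      · rw [Int.le_floor, hcast, ← hz1, ← hz0]; exact h4
      · funext i
        fin_cases i <;> simp [hz0, hz1]
        exact_mod_cast hcast
    · rintro ⟨y, hy, z, ⟨hz1, hz2⟩, rfl⟩
      constructor
      · rw [tri_mem c1 c2 h hc hh]
        simp only [Matrix.cons_val_zero, Matrix.cons_val_one, Matrix.head_cons]
        refine ⟨by positivity, ?_, ?_, ?_⟩
        · have : (y:ℤ) ≤ ⌊h⌋ := by omega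
          calc (y:ℚ) ≤ (⌊h⌋ : ℚ) := by exact_mod_cast this
            _ ≤ h := Int.floor_le h
        · exact le_trans (Int.le_ceil _) (by exact_mod_cast hz1)
        · exact le_trans (by exact_mod_cast hz2) (Int.floor_le _)
      · intro i
        fin_cases i
        · exact ⟨z, rfl⟩
        · exact ⟨y, rfl⟩
  rw [hset, Set.ncard_coe_finset]
  have hdisj : ∀ y ∈ range (⌊h⌋.toNat + 1), ∀ y' ∈ range (⌊h⌋.toNat + 1), y ≠ y' →
      Disjoint ((Finset.Icc ⌈c1*(y:ℚ)⌉ ⌊c2*(y:ℚ)⌋).image (fun z : ℤ => ![(z:ℚ), (y:ℚ)]))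
        ((Finset.Icc ⌈c1*(y':ℚ)⌉ ⌊c2*(y':ℚ)⌋).image (fun z : ℤ => ![(z:ℚ), (y':ℚ)])) := by
    intro y _ y' _ hne
    rw [Finset.disjoint_left]
    rintro v hv hv'
    simp only [Finset.mem_image] at hv hv'
    obtain ⟨z, _, rfl⟩ := hv
    obtain ⟨z', _, h'⟩ := hv'
    apply hne
    have := congrFun h' 1
    simp only [Matrix.cons_val_one, Matrix.head_cons, Matrix.cons_val_zero] at this
    exact_mod_cast this.symm
  rw [hF, Finset.card_biUnion hdisj]
  push_cast
  apply Finset.sum_congr rfl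
  intro y hy
  have hinj : Function.Injective (fun z : ℤ => (![(z:ℚ), (y:ℚ)] : Fin 2 → ℚ)) := by
    intro z z' hzz
    have := congrFun hzz 0
    simp only [Matrix.cons_val_zero] at this
    exact_mod_cast this
  rw [Finset.card_image_of_injective _ hinj, Int.card_Icc]
  have hle : ⌈c1*(y:ℚ)⌉ ≤ ⌊c2*(y:ℚ)⌋ + 1 := by
    calc ⌈c1*(y:ℚ)⌉ ≤ ⌈c2*(y:ℚ)⌉ := by gcongr
      _ ≤ ⌊c2*(y:ℚ)⌋ + 1 := Int.ceil_le_floor_add_one _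
  rw [show (((⌊c2*(y:ℚ)⌋ + 1 - ⌈c1*(y:ℚ)⌉).toNat : ℕ) : ℚ)
      = ((⌊c2*(y:ℚ)⌋ + 1 - ⌈c1*(y:ℚ)⌉ : ℤ) : ℚ) from by
    exact_mod_cast congrArg (Int.cast : ℤ → ℚ) (Int.toNat_of_nonneg (by omega))]
  push_cast
  ring

lemma per_n (f : ℚ → ℚ) (d : ℚ) (hf : ∀ x, f (x + d) = f x) (k : ℕ) (x : ℚ) :
    f (x + k * d) = f x := by
  induction k with
  | zero => simp
  | succ k ih => rw [show x + ((k+1:ℕ):ℚ)*d = (x + k*d) + d by push_cast; ring, hf, ih]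

end aux

lemma tri_smul (a b : ℕ) (s1 s2 : ℤ) (t1 t2 : ℕ) (r' : ℚ) :
    r' • Tri a b s1 s2 t1 t2 = convexHull ℚ
      {![0,0], ![((s1:ℚ)/t1) * ((a:ℚ)*r'/b), (a:ℚ)*r'/b],
        ![((s2:ℚ)/t2) * ((a:ℚ)*r'/b), (a:ℚ)*r'/b]} := by
  unfold Tri
  rw [← convexHull_smul]
  congr 1
  rw [Set.smul_set_insert, Set.smul_set_insert, Set.smul_set_singleton]
  have hv : ∀ u w : ℚ, r' • (![u, w] : Fin 2 → ℚ) = ![r' * u, r' * w] := by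
    intro u w; funext i; fin_cases i <;> simp
  have e0 : (![r' * 0, r' * 0] : Fin 2 → ℚ) = ![0, 0] := by
    funext i; fin_cases i <;> simp
  have e1 : (![r' * (((s1:ℚ)/t1) * ((a:ℚ)/b)), r' * ((a:ℚ)/b)] : Fin 2 → ℚ)
      = ![((s1:ℚ)/t1) * ((a:ℚ)*r'/b), (a:ℚ)*r'/b] := by
    funext i; fin_cases i <;> simp <;> ring
  have e2 : (![r' * (((s2:ℚ)/t2) * ((a:ℚ)/b)), r' * ((a:ℚ)/b)] : Fin 2 → ℚ)
      = ![((s2:ℚ)/t2) * ((a:ℚ)*r'/b), (a:ℚ)*r'/b] := by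
    funext i; fin_cases i <;> simp <;> ring
  rw [hv, hv, hv, e0, e1, e2]

/-- the linear coefficient of the rational Ehrhart quasi-polynomial of
the triangle `T` is
`Q₁(T,r) = (a/b)((t₁+t₂)/(2t₁t₂) - ({ar/b} - 1/2)(s₂/t₂ - s₁/t₁))`. -/
theorem stmt10 (a b t1 t2 : ℕ) (s1 s2 : ℤ) (ha : 0 < a) (hb : 0 < b)
    (ht1 : 0 < t1) (ht2 : 0 < t2) (hslope : (s1 : ℚ) / t1 < (s2 : ℚ) / t2)
    (hab : Nat.Coprime a b) (h1 : Int.gcd s1 (t1 : ℤ) = 1) (h2 : Int.gcd s2 (t2 : ℤ) = 1)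
    (Q : ℕ → ℚ → ℚ) (hQ : IsRatEhrhartCoeffs (Tri a b s1 s2 t1 t2) 2 Q) :
    ∀ r : ℚ, 0 ≤ r →
      Q 1 r = ((a : ℚ) / b) * (((t1 : ℚ) + t2) / (2 * t1 * t2) -
        (Int.fract ((a : ℚ) * r / b) - 1 / 2) * ((s2 : ℚ) / t2 - (s1 : ℚ) / t1)) := by
  intro r hr
  classical
  obtain ⟨hper, hcount⟩ := hQ
  obtain ⟨p0, hp0pos, hp0⟩ := hper 0
  obtain ⟨p1, hp1pos, hp1⟩ := hper 1
  obtain ⟨p2, hp2pos, hp2⟩ := hper 2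
  have hn0 : 0 < p0.num := Rat.num_pos.mpr hp0pos
  have hn1 : 0 < p1.num := Rat.num_pos.mpr hp1pos
  have hn2 : 0 < p2.num := Rat.num_pos.mpr hp2pos
  set A : ℕ := p0.num.toNat * p1.num.toNat * p2.num.toNat with hA
  have hApos : 0 < A := by
    apply Nat.mul_pos (Nat.mul_pos _ _) <;> omega
  set P : ℕ := A * b * t1 * t2 with hP
  have hPpos : 0 < P := by
    apply Nat.mul_pos (Nat.mul_pos (Nat.mul_pos hApos hb) ht1) ht2
  have hbq : (0:ℚ) < b := by exact_mod_cast hb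
  have ht1q : (0:ℚ) < t1 := by exact_mod_cast ht1
  have ht2q : (0:ℚ) < t2 := by exact_mod_cast ht2
  have haq : (0:ℚ) < a := by exact_mod_cast ha
  have hAq : (0:ℚ) < A := by exact_mod_cast hApos
  have hPq : (0:ℚ) < P := by exact_mod_cast hPpos
  -- the period P is a natural multiple of each pᵢ
  have hnum : ∀ p : ℚ, 0 < p → (p.num.toNat : ℚ) = p * p.den := by
    intro p hp
    have h1 : (p.num.toNat : ℚ) = (p.num : ℚ) := by
      exact_mod_cast Int.toNat_of_nonneg (Rat.num_pos.mpr hp).le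
    rw [h1]
    exact_mod_cast (Rat.mul_den_eq_num p).symm
  have e0 : ((P : ℕ) : ℚ) = ((p1.num.toNat * p2.num.toNat * p0.den * b * t1 * t2 : ℕ) : ℚ) * p0 := by
    rw [hP, hA]; push_cast [hnum p0 hp0pos]; ring
  have e1 : ((P : ℕ) : ℚ) = ((p0.num.toNat * p2.num.toNat * p1.den * b * t1 * t2 : ℕ) : ℚ) * p1 := by
    rw [hP, hA]; push_cast [hnum p1 hp1pos]; ring
  have e2 : ((P : ℕ) : ℚ) = ((p0.num.toNat * p1.num.toNat * p2.den * b * t1 * t2 : ℕ) : ℚ) * p2 := by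
    rw [hP, hA]; push_cast [hnum p2 hp2pos]; ring
  have hq : ∀ i : ℕ, i < 3 → ∀ n : ℕ, Q i (r + (n : ℚ) * (P : ℚ)) = Q i r := by
    intro i hi n
    interval_cases i
    · obtain ⟨k, hk⟩ : ∃ k : ℕ, ((P:ℕ):ℚ) = (k:ℚ) * p0 := ⟨_, e0⟩
      rw [show r + (n : ℚ) * (P : ℚ) = r + ((n * k : ℕ) : ℚ) * p0 by
        push_cast; rw [hk]; ring]
      exact per_n (Q 0) p0 hp0 _ r
    · obtain ⟨k, hk⟩ : ∃ k : ℕ, ((P:ℕ):ℚ) = (k:ℚ) * p1 := ⟨_, e1⟩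
      rw [show r + (n : ℚ) * (P : ℚ) = r + ((n * k : ℕ) : ℚ) * p1 by
        push_cast; rw [hk]; ring]
      exact per_n (Q 1) p1 hp1 _ r
    · obtain ⟨k, hk⟩ : ∃ k : ℕ, ((P:ℕ):ℚ) = (k:ℚ) * p2 := ⟨_, e2⟩
      rw [show r + (n : ℚ) * (P : ℚ) = r + ((n * k : ℕ) : ℚ) * p2 by
        push_cast; rw [hk]; ring]
      exact per_n (Q 2) p2 hp2 _ r
  set c1 : ℚ := (s1 : ℚ) / t1 with hc1
  set c2 : ℚ := (s2 : ℚ) / t2 with hc2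
  set h0 : ℚ := (a : ℚ) * r / b with hh0
  have hh0nn : (0:ℚ) ≤ h0 := by rw [hh0]; positivity
  set N : ℕ := ⌊h0⌋.toNat with hN
  have hNfl : ⌊h0⌋ = (N : ℤ) := (Int.toNat_of_nonneg (Int.floor_nonneg.mpr hh0nn)).symm
  set G0 : ℚ := ∑ y ∈ Finset.range (N + 1), gfun s1 s2 t1 t2 y with hG0
  set Mn : ℕ := a * A * t1 * t2 with hMn
  have hgf : ∀ y : ℕ, (1 - Int.fract (c2 * (y:ℚ)) - Int.fract (-(c1 * (y:ℚ))))
      = gfun s1 s2 t1 t2 y := by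
    intro y
    unfold gfun
    rw [hc1, hc2, show (s2:ℚ)/t2 * (y:ℚ) = (s2:ℚ) * y / t2 by ring,
      show -((s1:ℚ)/t1 * (y:ℚ)) = ((-s1 : ℤ):ℚ) * y / t1 by push_cast; ring]
  have main : ∀ n : ℕ,
      (c2 - c1) * ((N:ℚ) + (n:ℚ) * (Mn:ℚ)) * ((N:ℚ) + (n:ℚ) * (Mn:ℚ) + 1) / 2 + G0
        + (n:ℚ) * (a:ℚ) * (A:ℚ) * (((t1:ℚ) + (t2:ℚ)) / 2)
      = Q 0 r + Q 1 r * (r + (n:ℚ) * (P:ℚ)) + Q 2 r * (r + (n:ℚ) * (P:ℚ))^2 := by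
    intro n
    have hrn0 : (0:ℚ) ≤ r + (n:ℚ) * (P:ℚ) := by positivity
    have hRHS := hcount (r + (n:ℚ) * (P:ℚ)) hrn0
    rw [Finset.sum_range_succ, Finset.sum_range_succ, Finset.sum_range_succ,
      Finset.range_zero, Finset.sum_empty, hq 0 (by norm_num) n, hq 1 (by norm_num) n,
      hq 2 (by norm_num) n] at hRHS
    -- compute the lattice count
    have hfl : (a:ℚ) * (r + (n:ℚ) * (P:ℚ)) / b = h0 + ((n * Mn : ℕ) : ℚ) := by
      rw [hh0, hP, hMn]; push_cast; field_simp
    have hLHS : (latticeCount (Tri a b s1 s2 t1 t2) (r + (n:ℚ) * (P:ℚ)) : ℚ)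
        = (c2 - c1) * ((N:ℚ) + (n:ℚ) * (Mn:ℚ)) * ((N:ℚ) + (n:ℚ) * (Mn:ℚ) + 1) / 2 + G0
          + (n:ℚ) * (a:ℚ) * (A:ℚ) * (((t1:ℚ) + (t2:ℚ)) / 2) := by
      have hstep1 : latticeCount (Tri a b s1 s2 t1 t2) (r + (n:ℚ) * (P:ℚ))
          = Set.ncard {x : Fin 2 → ℚ | x ∈ convexHull ℚ
              {![0,0], ![c1 * ((a:ℚ) * (r + (n:ℚ) * (P:ℚ)) / b), (a:ℚ) * (r + (n:ℚ) * (P:ℚ)) / b],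
                ![c2 * ((a:ℚ) * (r + (n:ℚ) * (P:ℚ)) / b), (a:ℚ) * (r + (n:ℚ) * (P:ℚ)) / b]}
              ∧ IsLatticePt x} := by
        rw [latticeCount, tri_smul a b s1 s2 t1 t2 (r + (n:ℚ) * (P:ℚ))]
      rw [hstep1, tri_count c1 c2 _ hslope (by positivity)]
      have hflr : ⌊(a:ℚ) * (r + (n:ℚ) * (P:ℚ)) / b⌋.toNat = N + n * Mn := by
        rw [hfl, Int.floor_add_natCast, hNfl]
        omega
      rw [hflr]
      rw [fsum c1 c2 (N + n * Mn)]
      rw [Finset.sum_congr rfl (fun y _ => hgf y)]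
      rw [show N + n * Mn + 1 = N + 1 + (n * a * A) * (t1 * t2) by rw [hMn]; ring]
      rw [Gshift s1 s2 t1 t2 ht1 ht2 h1 h2 N (n * a * A), ← hG0]
      push_cast
      ring
    rw [← hLHS, hRHS]
    ring
  have k0 := main 0
  have k1 := main 1
  have k2 := main 2
  push_cast at k0 k1 k2
  have hfinal : Q 1 r * (2 * (P:ℚ)^2)
      = (P:ℚ) * ((c2 - c1) * (Mn:ℚ) * (2*(N:ℚ) + (Mn:ℚ) + 1) + (a:ℚ)*(A:ℚ)*((t1:ℚ)+(t2:ℚ)))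
        - (c2 - c1) * (Mn:ℚ)^2 * (2*r + (P:ℚ)) := by
    linear_combination 2*(P:ℚ)*(k0 - k1) + (2*r + (P:ℚ))*(k2 - 2*k1 + k0)
  have hQ1 : Q 1 r = ((P:ℚ) * ((c2 - c1) * (Mn:ℚ) * (2*(N:ℚ) + (Mn:ℚ) + 1)
        + (a:ℚ)*(A:ℚ)*((t1:ℚ)+(t2:ℚ))) - (c2 - c1) * (Mn:ℚ)^2 * (2*r + (P:ℚ)))
        / (2 * (P:ℚ)^2) := by
    rw [eq_div_iff (by positivity)]
    linear_combination hfinal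
  have hfr : Int.fract ((a:ℚ) * r / b) = h0 - (N:ℚ) := by
    rw [Int.fract, ← hh0, hNfl]
    push_cast
    ring
  rw [hQ1, hfr, hP, hMn, hh0, hc1, hc2]
  have hbne : (b:ℚ) ≠ 0 := ne_of_gt hbq
  have ht1ne : (t1:ℚ) ≠ 0 := ne_of_gt ht1q
  have ht2ne : (t2:ℚ) ≠ 0 := ne_of_gt ht2q
  have hAne : (A:ℚ) ≠ 0 := ne_of_gt hAq
  push_cast
  field_simp
  ring
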